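/- Let cr(G) be the corona of a graph G on d ≥ 1 vertices (obtained by attaching one pendant vertex to each vertex of G), and let α ∈ ℝ^{2d} be a vertex of the polyhedron SP(cr(G)) = {x : x_i + x_j ≥ 1 for edges {i,j} of cr(G), x ≥ 0}. Then the sum of the coordinates of α equals d. -/

import Mathlib

/-- The corona `cr(G)` of a graph `G` on `Fin d`: attach one pendant vertex
`Sum.inr i` to each vertex `Sum.inl i` of `G`. -/
def corona {d : ℕ} (G : SimpleGraph (Fin d)) : SimpleGraph (Fin d ⊕ Fin d) where
  Adj u v :=
    match u, v with
    | Sum.inl i, Sum.inl j => G.Adj i j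
    | Sum.inl i, Sum.inr j => i = j
    | Sum.inr i, Sum.inl j => i = j
    | Sum.inr _, Sum.inr _ => False
  symm := by
    refine ⟨?_⟩
    rintro (i | i) (j | j) h
    · exact G.symm.symm _ _ h
    · exact h.symm
    · exact h.symm
    · exact h.elim
  loopless := by
    refine ⟨?_⟩
    rintro (i | i) h
    · exact G.loopless.irrefl i h
    · exact h

/-- The polyhedron `SP(G) = {x ∈ ℝ^V : x i + x j ≥ 1 for all edges ij, x ≥ 0}`. -/
def SPgraph {V : Type*} (G : SimpleGraph V) : Set (V → ℝ) :=
  {x | (∀ i j, G.Adj i j → 1 ≤ x i + x j) ∧ ∀ i, 0 ≤ x i}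

lemma perturb_not_extreme {V : Type*} [Fintype V] [Nonempty V] [DecidableEq V]
    (G : SimpleGraph V) (α : V → ℝ) (u : V)
    (h0 : 0 < α u) (hslack : ∀ j, G.Adj u j → 1 < α u + α j) :
    α ∉ Set.extremePoints ℝ (SPgraph G) := by
  classical
  rintro ⟨hαS, hext⟩
  set g : V → ℝ := fun j => if G.Adj u j then α u + α j - 1 else α u with hg
  have hne : (Finset.univ : Finset V).Nonempty := Finset.univ_nonempty
  set ε : ℝ := Finset.univ.inf' hne g with hε
  have hεpos : 0 < ε := by
    rw [hε, Finset.lt_inf'_iff]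
    intro j _
    by_cases h : G.Adj u j
    · have := hslack j h
      simp only [hg, if_pos h]
      linarith
    · simp only [hg, if_neg h]; exact h0
  have hεle : ∀ j, ε ≤ g j := fun j => Finset.inf'_le g (Finset.mem_univ j)
  have hεu : ε ≤ α u := by
    have := hεle u
    simpa [hg, G.loopless.irrefl u] using this
  set β : V → ℝ := Function.update α u (α u + ε) with hβ
  set γ : V → ℝ := Function.update α u (α u - ε) with hγ
  have hβS : β ∈ SPgraph G := by
    constructor
    · intro i j hij
      have hs := hαS.1 i j hij
      simp only [hβ, Function.update_apply]
      split_ifs with h1 h2 h2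
      · subst h1; subst h2; exact absurd hij (G.loopless.irrefl _)
      · subst h1; linarith
      · subst h2; linarith
      · linarith
    · intro i
      simp only [hβ, Function.update_apply]
      split_ifs
      · linarith
      · exact hαS.2 i
  have hγS : γ ∈ SPgraph G := by
    constructor
    · intro i j hij
      have hs := hαS.1 i j hij
      simp only [hγ, Function.update_apply]
      split_ifs with h1 h2 h2
      · subst h1; subst h2; exact absurd hij (G.loopless.irrefl _)
      · subst h1
        have := hεle j
        rw [hg] at this
        simp only [if_pos hij] at this
        linarith
      · subst h2
        have := hεle i
        rw [hg] at this
        simp only [if_pos (G.symm.symm _ _ hij)] at this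
        linarith
      · linarith
    · intro i
      simp only [hγ, Function.update_apply]
      split_ifs
      · linarith
      · exact hαS.2 i
  have hseg : α ∈ openSegment ℝ β γ := by
    refine ⟨1/2, 1/2, by norm_num, by norm_num, by norm_num, ?_⟩
    funext v
    simp only [Pi.add_apply, Pi.smul_apply, smul_eq_mul, hβ, hγ, Function.update_apply]
    split_ifs with h
    · subst h; ring
    · ring
  have := (hext hβS hγS hseg)
  have h2 := congrFun this u
  simp only [hβ, Function.update_self] at h2
  linarith

/-- every vertex (extreme point) `α` of the polyhedron
`SP(cr(G))` of the corona of a graph `G` on `d ≥ 1` vertices has coordinate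
sum equal to `d`. -/
theorem vertex_SP_corona_sum_eq
    {d : ℕ} (hd : 1 ≤ d) (G : SimpleGraph (Fin d))
    (α : (Fin d ⊕ Fin d) → ℝ)
    (hα : α ∈ Set.extremePoints ℝ (SPgraph (corona G))) :
    ∑ u, α u = (d : ℝ) := by
  haveI : Nonempty (Fin d) := ⟨⟨0, hd⟩⟩
  have hαS := hα.1
  have key : ∀ i : Fin d, α (Sum.inl i) + α (Sum.inr i) = 1 := by
    intro i
    have h1 : 1 ≤ α (Sum.inl i) + α (Sum.inr i) :=
      hαS.1 (Sum.inl i) (Sum.inr i) rfl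
    by_contra hne
    have hlt : 1 < α (Sum.inl i) + α (Sum.inr i) := lt_of_le_of_ne h1 (Ne.symm hne)
    rcases (hαS.2 (Sum.inr i)).lt_or_eq with hpos | hzero
    · refine perturb_not_extreme (corona G) α (Sum.inr i) hpos ?_ hα
      rintro (j | j) hadj
      · have : i = j := hadj
        subst this
        linarith
      · exact hadj.elim
    · refine perturb_not_extreme (corona G) α (Sum.inl i) ?_ ?_ hα
      · nlinarith [hαS.2 (Sum.inl i)]
      · rintro (j | j) hadj
        · have hj := hαS.2 (Sum.inl j)
          nlinarith
        · have : i = j := hadj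
          subst this
          exact hlt
  rw [Fintype.sum_sum_type, ← Finset.sum_add_distrib]
  simp only [key]
  simp
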